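/- Under the asymmetric Lovász Local Lemma condition, for uniform random q-colourings of a hypergraph H whose hyperedges all have size between k' and k, if t ≥ k and q ≥ (etΔ)^{1/(k'−1)} where Δ is the maximum degree, then for every vertex v and every colour c, the probability under the uniform distribution over proper colourings that v receives colour c is at most (1/q)(1 + 4/t). -/

import Mathlib

open Finset

namespace MUB

variable {V : Type*} [Fintype V] [DecidableEq V]

def mono {q : ℕ} (e : Finset V) (σ : V → Fin q) : Prop := ∃ c', ∀ u ∈ e, σ u = c'

def Av {q : ℕ} (S : Finset (Finset V)) (σ : V → Fin q) : Prop := ∀ f ∈ S, ¬ mono f σ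

def mix {q : ℕ} (e : Finset V) (σ τ : V → Fin q) : V → Fin q :=
  fun u => if u ∈ e then σ u else τ u

lemma Av_anti {q : ℕ} {S T : Finset (Finset V)} (h : S ⊆ T) {σ : V → Fin q}
    (hσ : Av T σ) : Av S σ := fun f hf => hσ f (h hf)

lemma indep_ncard {q : ℕ} (e : Finset V) (P Q : (V → Fin q) → Prop)
    (hP : ∀ σ τ : V → Fin q, (∀ u ∈ e, σ u = τ u) → P σ → P τ)
    (hQ : ∀ σ τ : V → Fin q, (∀ u ∉ e, σ u = τ u) → Q σ → Q τ) :
    {σ : V → Fin q | Q σ ∧ P σ}.ncard * q ^ (Fintype.card V)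
      = {σ : V → Fin q | P σ}.ncard * {σ : V → Fin q | Q σ}.ncard := by
  have hmixP : ∀ σ τ : V → Fin q, P σ → P (mix e σ τ) := fun σ τ h =>
    hP σ _ (fun u hu => by simp [mix, hu]) h
  have hmixQ : ∀ σ τ : V → Fin q, Q τ → Q (mix e σ τ) := fun σ τ h =>
    hQ τ _ (fun u hu => by simp [mix, hu]) h
  have key : ∀ σ τ : V → Fin q, mix e (mix e σ τ) (mix e τ σ) = σ := by
    intro σ τ; funext u; by_cases h : u ∈ e <;> simp [mix, h]
  let E : ({σ : V → Fin q | Q σ ∧ P σ} × (V → Fin q)) ≃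
      ({σ : V → Fin q | P σ} × {σ : V → Fin q | Q σ}) :=
  { toFun := fun p => (⟨mix e p.1.1 p.2, hmixP _ _ p.1.2.2⟩, ⟨mix e p.2 p.1.1, hmixQ _ _ p.1.2.1⟩)
    invFun := fun p => (⟨mix e p.1.1 p.2.1, hmixQ _ _ p.2.2, hmixP _ _ p.1.2⟩, mix e p.2.1 p.1.1)
    left_inv := by
      rintro ⟨⟨σ, hσ⟩, τ⟩
      simp only [Prod.mk.injEq, Subtype.mk.injEq]
      exact ⟨key σ τ, key τ σ⟩
    right_inv := by
      rintro ⟨⟨α, hα⟩, ⟨β, hβ⟩⟩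
      simp only [Prod.mk.injEq, Subtype.mk.injEq]
      exact ⟨key α β, key β α⟩ }
  have hcongr := Nat.card_congr E
  rw [Nat.card_prod, Nat.card_prod] at hcongr
  simpa [Nat.card_coe_set_eq, Nat.card_eq_fintype_card, Fintype.card_fun] using hcongr

lemma ncard_vc {q : ℕ} (v : V) (c : Fin q) :
    {σ : V → Fin q | σ v = c}.ncard = q ^ (Fintype.card V - 1) := by
  let E : {σ : V → Fin q | σ v = c} ≃ ({u : V // u ≠ v} → Fin q) :=
  { toFun := fun σ u => σ.1 u.1
    invFun := fun g => ⟨fun u => if h : u = v then c else g ⟨u, h⟩, by simp⟩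
    left_inv := by
      rintro ⟨σ, hσ⟩
      apply Subtype.ext; funext u
      by_cases h : u = v
      · simp only [h, dif_pos]; exact (hσ).symm
      · simp [h]
    right_inv := by
      intro g; funext u
      simp [u.2] }
  have hcongr := Nat.card_congr E
  have h2 : Fintype.card {u : V // u ≠ v} = Fintype.card V - 1 := by
    simp [Fintype.card_subtype_compl]
  rw [Nat.card_coe_set_eq] at hcongr
  rw [hcongr, Nat.card_eq_fintype_card, Fintype.card_fun, Fintype.card_fin, h2]

lemma ncard_mono_le {q : ℕ} (e : Finset V) (he : e.Nonempty) :
    {σ : V → Fin q | mono e σ}.ncard ≤ q ^ (Fintype.card V - (e.card - 1)) := by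
  obtain ⟨u₀, hu₀⟩ := he
  have hinj : Function.Injective
      (fun (σ : {σ : V → Fin q | mono e σ}) (u : {u : V // u ∉ e.erase u₀}) => σ.1 u.1) := by
    rintro ⟨σ, cσ, hcσ⟩ ⟨τ, cτ, hcτ⟩ h
    apply Subtype.ext; funext u
    by_cases hu : u ∈ e.erase u₀
    · have hue : u ∈ e := (Finset.mem_erase.mp hu).2
      have h0 : σ u₀ = τ u₀ := congrFun h ⟨u₀, Finset.notMem_erase u₀ e⟩
      calc σ u = cσ := hcσ u hue
        _ = σ u₀ := (hcσ u₀ hu₀).symm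
        _ = τ u₀ := h0
        _ = cτ := hcτ u₀ hu₀
        _ = τ u := (hcτ u hue).symm
    · exact congrFun h ⟨u, hu⟩
  have hle := Nat.card_le_card_of_injective _ hinj
  rw [Nat.card_coe_set_eq] at hle
  rw [Nat.card_eq_fintype_card, Fintype.card_fun, Fintype.card_fin] at hle
  have h2 : Fintype.card {u : V // u ∉ e.erase u₀} = Fintype.card V - (e.card - 1) := by
    have := Fintype.card_subtype_compl (fun u : V => u ∈ e.erase u₀)
    rw [this, Fintype.card_coe, Finset.card_erase_of_mem hu₀]
  rwa [h2] at hle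

lemma avoid_split {q : ℕ} (S : Finset (Finset V)) (f : Finset V) :
    {σ : V → Fin q | Av S σ}.ncard
      = {σ : V → Fin q | Av (insert f S) σ}.ncard
        + {σ : V → Fin q | Av S σ ∧ mono f σ}.ncard := by
  have hset : {σ : V → Fin q | Av S σ}
      = {σ : V → Fin q | Av (insert f S) σ} ∪ {σ : V → Fin q | Av S σ ∧ mono f σ} := by
    ext σ
    simp only [Set.mem_setOf_eq, Set.mem_union, Av, Finset.forall_mem_insert]
    by_cases h : mono f σ <;> tauto
  have hdisj : Disjoint {σ : V → Fin q | Av (insert f S) σ}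
      {σ : V → Fin q | Av S σ ∧ mono f σ} := by
    rw [Set.disjoint_left]
    intro σ h1 h2
    exact h1 f (Finset.mem_insert_self f S) h2.2
  rw [hset, Set.ncard_union_eq hdisj]

lemma peel {q : ℕ} (𝓔 Sbig : Finset (Finset V)) (x : ℝ) (hx1 : x ≤ 1)
    (hmain : ∀ T ⊂ Sbig, ∀ f ∈ 𝓔, f ∉ T →
      ({σ : V → Fin q | Av T σ ∧ mono f σ}.ncard : ℝ) ≤ x * ({σ : V → Fin q | Av T σ}.ncard : ℝ)) :
    ∀ U : Finset (Finset V), U ⊆ 𝓔 → ∀ S₂ : Finset (Finset V), Disjoint U S₂ → S₂ ∪ U ⊆ Sbig →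
      (1 - x) ^ U.card * ({σ : V → Fin q | Av S₂ σ}.ncard : ℝ)
        ≤ ({σ : V → Fin q | Av (S₂ ∪ U) σ}.ncard : ℝ) := by
  intro U
  induction U using Finset.induction_on with
  | empty => intro _ S₂ _ _; simp
  | @insert f U hf IH =>
    intro hU𝓔 S₂ hdisj hsub
    have hf𝓔 : f ∈ 𝓔 := hU𝓔 (mem_insert_self f U)
    have hU'𝓔 : U ⊆ 𝓔 := (subset_insert f U).trans hU𝓔
    have hdisj' : Disjoint U S₂ := disjoint_of_subset_left (subset_insert f U) hdisj
    have hsub' : S₂ ∪ U ⊆ Sbig := (union_subset_union_right (subset_insert f U)).trans hsub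
    have hfT : f ∉ S₂ ∪ U := by
      rw [Finset.mem_union]
      push_neg
      exact ⟨Finset.disjoint_left.mp hdisj (mem_insert_self f U), hf⟩
    have hT_ss : S₂ ∪ U ⊂ Sbig := by
      refine (Finset.ssubset_iff_of_subset hsub').mpr ⟨f, ?_, hfT⟩
      exact hsub (mem_union_right _ (mem_insert_self f U))
    have h1 := hmain _ hT_ss f hf𝓔 hfT
    have h2 := IH hU'𝓔 S₂ hdisj' hsub'
    have h3 := avoid_split (q := q) (S₂ ∪ U) f
    have hunion : S₂ ∪ insert f U = insert f (S₂ ∪ U) := Finset.union_insert ..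
    rw [hunion, Finset.card_insert_of_notMem hf, pow_succ]
    have h3R : ({σ : V → Fin q | Av (S₂ ∪ U) σ}.ncard : ℝ)
        = ({σ : V → Fin q | Av (insert f (S₂ ∪ U)) σ}.ncard : ℝ)
          + ({σ : V → Fin q | Av (S₂ ∪ U) σ ∧ mono f σ}.ncard : ℝ) := by
      exact_mod_cast congrArg (Nat.cast : ℕ → ℝ) h3
    have h1mx : (0:ℝ) ≤ 1 - x := by linarith
    have hC0 : (0:ℝ) ≤ ({σ : V → Fin q | Av S₂ σ}.ncard : ℝ) := Nat.cast_nonneg _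
    have step1 : (1 - x) * ((1 - x) ^ U.card * ({σ : V → Fin q | Av S₂ σ}.ncard : ℝ))
        ≤ (1 - x) * ({σ : V → Fin q | Av (S₂ ∪ U) σ}.ncard : ℝ) :=
      mul_le_mul_of_nonneg_left h2 h1mx
    nlinarith [step1, h1, h3R]

lemma main {q : ℕ} (𝓔 : Finset (Finset V)) (hq1 : 1 ≤ q) (x : ℝ) (hx0 : 0 ≤ x) (hx1 : x ≤ 1)
    (hnon : ∀ e ∈ 𝓔, e.Nonempty)
    (hcond : ∀ e ∈ 𝓔, (1:ℝ) ≤ x * (1 - x) ^ ((𝓔.filter (fun f => f ≠ e ∧ ¬ Disjoint f e)).card)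
        * (q:ℝ) ^ (e.card - 1)) :
    ∀ S : Finset (Finset V), S ⊆ 𝓔 → ∀ e ∈ 𝓔, e ∉ S →
      ({σ : V → Fin q | Av S σ ∧ mono e σ}.ncard : ℝ)
        ≤ x * ({σ : V → Fin q | Av S σ}.ncard : ℝ) := by
  intro S
  induction S using Finset.strongInduction with
  | _ S IH =>
    intro hS𝓔 e he heS
    set Ne := (𝓔.filter (fun f => f ≠ e ∧ ¬ Disjoint f e)).card with hNe
    set S₁ := S.filter (fun f => ¬ Disjoint f e) with hS₁def
    set S₂ := S.filter (fun f => Disjoint f e) with hS₂def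
    have hunion : S₂ ∪ S₁ = S := filter_union_filter_not_eq _ S
    have hS₂S : S₂ ⊆ S := filter_subset _ S
    have hS₁S : S₁ ⊆ S := filter_subset _ S
    -- step 1 : shrink to S₂
    have h1 : {σ : V → Fin q | Av S σ ∧ mono e σ}.ncard
        ≤ {σ : V → Fin q | Av S₂ σ ∧ mono e σ}.ncard := by
      apply Set.ncard_le_ncard
      · intro σ hσ; exact ⟨Av_anti hS₂S hσ.1, hσ.2⟩
      · exact Set.toFinite _
    -- independence
    have hP : ∀ σ τ : V → Fin q, (∀ u ∈ e, σ u = τ u) → mono e σ → mono e τ := by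
      rintro σ τ hag ⟨c', hc'⟩
      exact ⟨c', fun u hu => (hag u hu).symm.trans (hc' u hu)⟩
    have hQ : ∀ σ τ : V → Fin q, (∀ u ∉ e, σ u = τ u) → Av S₂ σ → Av S₂ τ := by
      intro σ τ hag hav f hf hm
      obtain ⟨c', hc'⟩ := hm
      refine hav f hf ⟨c', fun u hu => ?_⟩
      have hune : u ∉ e := Finset.disjoint_left.mp (Finset.mem_filter.mp hf).2 hu
      rw [hag u hune]; exact hc' u hu
    have hindep := indep_ncard e (mono e) (Av S₂) hP hQ
    have hmonoLe := ncard_mono_le (q := q) e (hnon e he)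
    have hecard : e.card ≤ Fintype.card V := by
      simpa using Finset.card_le_card (Finset.subset_univ e)
    have hsplit : q ^ (Fintype.card V)
        = q ^ (Fintype.card V - (e.card - 1)) * q ^ (e.card - 1) := by
      rw [← pow_add]; congr 1; omega
    have hq0 : 0 < q := hq1
    have hmain1 : {σ : V → Fin q | Av S₂ σ ∧ mono e σ}.ncard * q ^ (e.card - 1)
        ≤ {σ : V → Fin q | Av S₂ σ}.ncard := by
      have hpos : 0 < q ^ (Fintype.card V - (e.card - 1)) := pow_pos hq0 _
      refine Nat.le_of_mul_le_mul_left ?_ hpos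
      calc q ^ (Fintype.card V - (e.card - 1))
            * ({σ : V → Fin q | Av S₂ σ ∧ mono e σ}.ncard * q ^ (e.card - 1))
          = {σ : V → Fin q | Av S₂ σ ∧ mono e σ}.ncard * q ^ (Fintype.card V) := by
            rw [hsplit]; ring
        _ = {σ : V → Fin q | mono e σ}.ncard * {σ : V → Fin q | Av S₂ σ}.ncard := hindep
        _ ≤ q ^ (Fintype.card V - (e.card - 1)) * {σ : V → Fin q | Av S₂ σ}.ncard :=
            Nat.mul_le_mul_right _ hmonoLe
    -- peeling
    have hdisj12 : Disjoint S₁ S₂ := by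
      rw [Finset.disjoint_left]; intro f hf1 hf2
      exact (Finset.mem_filter.mp hf1).2 (Finset.mem_filter.mp hf2).2
    have hsubS : S₂ ∪ S₁ ⊆ S := by rw [hunion]
    have hpeel := peel 𝓔 S x hx1
      (fun T hT f hf hfT => IH T hT (hT.subset.trans hS𝓔) f hf hfT)
      S₁ (hS₁S.trans hS𝓔) S₂ hdisj12 hsubS
    rw [hunion] at hpeel
    -- neighbour bound
    have hS₁sub : S₁ ⊆ 𝓔.filter (fun f => f ≠ e ∧ ¬ Disjoint f e) := by
      intro f hf
      rw [Finset.mem_filter] at hf ⊢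
      exact ⟨hS𝓔 hf.1, fun hfe => heS (hfe ▸ hf.1), hf.2⟩
    have hS₁card : S₁.card ≤ Ne := Finset.card_le_card hS₁sub
    have hpow : (1 - x) ^ Ne ≤ (1 - x) ^ S₁.card :=
      pow_le_pow_of_le_one (by linarith) (by linarith) hS₁card
    -- assemble
    have hA0 : (0:ℝ) ≤ ({σ : V → Fin q | Av S₂ σ ∧ mono e σ}.ncard : ℝ) := Nat.cast_nonneg _
    have hC0 : (0:ℝ) ≤ ({σ : V → Fin q | Av S₂ σ}.ncard : ℝ) := Nat.cast_nonneg _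
    have hmain1R : ({σ : V → Fin q | Av S₂ σ ∧ mono e σ}.ncard : ℝ) * (q:ℝ) ^ (e.card - 1)
        ≤ ({σ : V → Fin q | Av S₂ σ}.ncard : ℝ) := by exact_mod_cast hmain1
    have hcond' := hcond e he
    calc ({σ : V → Fin q | Av S σ ∧ mono e σ}.ncard : ℝ)
        ≤ ({σ : V → Fin q | Av S₂ σ ∧ mono e σ}.ncard : ℝ) := by exact_mod_cast h1
      _ ≤ ({σ : V → Fin q | Av S₂ σ ∧ mono e σ}.ncard : ℝ)
            * (x * (1 - x) ^ Ne * (q:ℝ) ^ (e.card - 1)) := by nlinarith [hcond', hA0]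
      _ = (x * (1 - x) ^ Ne)
            * (({σ : V → Fin q | Av S₂ σ ∧ mono e σ}.ncard : ℝ) * (q:ℝ) ^ (e.card - 1)) := by
          ring
      _ ≤ (x * (1 - x) ^ Ne) * ({σ : V → Fin q | Av S₂ σ}.ncard : ℝ) := by
          apply mul_le_mul_of_nonneg_left hmain1R
          exact mul_nonneg hx0 (pow_nonneg (by linarith) _)
      _ = x * ((1 - x) ^ Ne * ({σ : V → Fin q | Av S₂ σ}.ncard : ℝ)) := by ring
      _ ≤ x * ((1 - x) ^ S₁.card * ({σ : V → Fin q | Av S₂ σ}.ncard : ℝ)) := by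
          exact mul_le_mul_of_nonneg_left (mul_le_mul_of_nonneg_right hpow hC0) hx0
      _ ≤ x * ({σ : V → Fin q | Av S σ}.ncard : ℝ) := mul_le_mul_of_nonneg_left hpeel hx0

lemma exp_le_pow {x : ℝ} (hx0 : 0 ≤ x) (hx2 : x ≤ 1/2) (m : ℕ)
    (hm : (m:ℝ) * (x/(1-x)) ≤ 1) : Real.exp (-1) ≤ (1-x)^m := by
  have h1x : (0:ℝ) < 1 - x := by linarith
  have hbase : Real.exp (-(x/(1-x))) ≤ 1 - x := by
    have h := Real.add_one_le_exp (x/(1-x))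
    have h2 : 1/(1-x) ≤ Real.exp (x/(1-x)) := by
      have h3 : 1/(1-x) = x/(1-x) + 1 := by field_simp; ring
      linarith
    rw [Real.exp_neg]
    calc (Real.exp (x/(1-x)))⁻¹ ≤ (1/(1-x))⁻¹ := by
          apply inv_anti₀ (by positivity) h2
      _ = 1 - x := by rw [one_div, inv_inv]
  calc Real.exp (-1) ≤ Real.exp (-((m:ℝ)*(x/(1-x)))) := Real.exp_le_exp.mpr (by linarith)
    _ = Real.exp (-(x/(1-x))) ^ m := by
        rw [show -((m:ℝ)*(x/(1-x))) = (m:ℝ)*(-(x/(1-x))) by ring, Real.exp_nat_mul]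
    _ ≤ (1-x)^m := pow_le_pow_left₀ (Real.exp_nonneg _) hbase m

end MUB

/-- Marginal upper bound in the local lemma regime.  Let `H = (V,𝓔)` be a
hypergraph of maximum degree `Δ` whose hyperedges all have size between `k'` and `k`.
If `t ≥ k` and `q ≥ (etΔ)^{1/(k'−1)}`, then for every vertex `v` and colour `c`, the
probability under the uniform distribution over proper `q`-colourings that `v` gets
colour `c` is at most `(1/q)(1 + 4/t)`. -/
theorem marginal_upper_bound
    {V : Type*} [Fintype V] [DecidableEq V] (𝓔 : Finset (Finset V))
    (q k k' Δ : ℕ) (t : ℝ) (hk' : 2 ≤ k')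
    (hsize : ∀ e ∈ 𝓔, k' ≤ e.card ∧ e.card ≤ k)
    (hdeg : ∀ v : V, (𝓔.filter (fun e => v ∈ e)).card ≤ Δ)
    (ht : (k : ℝ) ≤ t)
    (hq : (Real.exp 1 * t * (Δ : ℝ)) ^ ((1 : ℝ) / ((k' : ℝ) - 1)) ≤ (q : ℝ))
    (hne : {σ : V → Fin q | ∀ e ∈ 𝓔, ¬ ∃ c', ∀ u ∈ e, σ u = c'}.Nonempty)
    (v : V) (c : Fin q) :
    ({σ : V → Fin q | (∀ e ∈ 𝓔, ¬ ∃ c', ∀ u ∈ e, σ u = c') ∧ σ v = c}.ncard : ℝ)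
      ≤ (1 / (q : ℝ)) * (1 + 4 / t)
        * ({σ : V → Fin q | ∀ e ∈ 𝓔, ¬ ∃ c', ∀ u ∈ e, σ u = c'}.ncard : ℝ) := by
  clear hne
  have hq0 : 0 < q := c.pos
  have hn1 : 1 ≤ Fintype.card V := Fintype.card_pos_iff.mpr ⟨v⟩
  have ht0 : (0:ℝ) ≤ t := le_trans (by positivity) ht
  show ({σ : V → Fin q | MUB.Av 𝓔 σ ∧ σ v = c}.ncard : ℝ)
      ≤ (1 / (q : ℝ)) * (1 + 4 / t) * ({σ : V → Fin q | MUB.Av 𝓔 σ}.ncard : ℝ)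
  rcases Finset.eq_empty_or_nonempty 𝓔 with h𝓔 | ⟨e₀, he₀⟩
  · subst h𝓔
    have e1 : {σ : V → Fin q | MUB.Av ∅ σ ∧ σ v = c} = {σ : V → Fin q | σ v = c} := by
      ext σ; simp [MUB.Av]
    have e2 : {σ : V → Fin q | MUB.Av (∅ : Finset (Finset V)) σ} = Set.univ := by
      ext σ; simp [MUB.Av]
    rw [e1, e2, MUB.ncard_vc v c, Set.ncard_univ, Nat.card_eq_fintype_card, Fintype.card_fun,
      Fintype.card_fin]
    push_cast
    have hq0R : (0:ℝ) < q := by exact_mod_cast hq0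
    have hqn : (q:ℝ)^(Fintype.card V) = (q:ℝ)^(Fintype.card V - 1) * q := by
      rw [← pow_succ]; congr 1; omega
    have h4t : (0:ℝ) ≤ 4/t := by positivity
    have heq : 1/(q:ℝ) * (1+4/t) * ((q:ℝ)^(Fintype.card V - 1) * q)
        = (1+4/t) * (q:ℝ)^(Fintype.card V - 1) := by
      field_simp
    rw [hqn, heq]
    nlinarith [pow_nonneg hq0R.le (Fintype.card V - 1), h4t]
  · -- main case
    have hq1 : 1 ≤ q := hq0
    have hk'k : k' ≤ k := le_trans (hsize e₀ he₀).1 (hsize e₀ he₀).2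
    have hk2 : 2 ≤ k := hk'.trans hk'k
    have ht2 : (2:ℝ) ≤ t := le_trans (by exact_mod_cast hk2) ht
    have ht0' : (0:ℝ) < t := by linarith
    have hΔ1 : 1 ≤ Δ := by
      obtain ⟨u₀, hu₀⟩ : e₀.Nonempty := Finset.card_pos.mp (by have := (hsize e₀ he₀).1; omega)
      calc 1 ≤ (𝓔.filter (fun e => u₀ ∈ e)).card :=
            Finset.card_pos.mpr ⟨e₀, Finset.mem_filter.mpr ⟨he₀, hu₀⟩⟩
        _ ≤ Δ := hdeg u₀
    have hΔR : (1:ℝ) ≤ Δ := by exact_mod_cast hΔ1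
    have hΔ0 : (0:ℝ) < Δ := by linarith
    have htΔ : (2:ℝ) ≤ t * Δ := by nlinarith
    set x : ℝ := 1/(t*Δ) with hxdef
    have hx0 : (0:ℝ) ≤ x := by positivity
    have hx2 : x ≤ 1/2 := one_div_le_one_div_of_le two_pos htΔ
    have hx1 : x ≤ 1 := by linarith
    have h1mx : (0:ℝ) ≤ 1 - x := by linarith
    have hnon : ∀ e ∈ 𝓔, e.Nonempty := by
      intro e he
      exact Finset.card_pos.mp (by have := (hsize e he).1; omega)
    have hM0 : (0:ℝ) < Real.exp 1 * t * Δ := by positivity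
    have hqpow : Real.exp 1 * t * Δ ≤ (q:ℝ) ^ (k' - 1) := by
      have hk'R : (1:ℝ) ≤ (k':ℝ) - 1 := by
        have : (2:ℝ) ≤ (k':ℝ) := by exact_mod_cast hk'
        linarith
      have h1 : ((Real.exp 1 * t * Δ) ^ ((1:ℝ)/((k':ℝ)-1))) ^ ((k':ℝ)-1)
          ≤ (q:ℝ) ^ ((k':ℝ)-1) :=
        Real.rpow_le_rpow (Real.rpow_nonneg hM0.le _) hq (by linarith)
      rw [← Real.rpow_mul hM0.le, one_div_mul_cancel (by linarith : ((k':ℝ)-1) ≠ 0),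
        Real.rpow_one] at h1
      have h2 : ((k':ℝ)-1) = ((k'-1 : ℕ) : ℝ) := by
        push_cast [Nat.cast_sub (by omega : 1 ≤ k')]; ring
      rwa [h2, Real.rpow_natCast] at h1
    have hcond : ∀ e ∈ 𝓔, (1:ℝ) ≤ x * (1 - x) ^ ((𝓔.filter (fun f => f ≠ e ∧ ¬ Disjoint f e)).card)
        * (q:ℝ) ^ (e.card - 1) := by
      intro e he
      set Ne := (𝓔.filter (fun f => f ≠ e ∧ ¬ Disjoint f e)).card with hNedef
      have hne2 : Ne ≤ e.card * (Δ - 1) := by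
        have hsub2 : 𝓔.filter (fun f => f ≠ e ∧ ¬ Disjoint f e)
            ⊆ e.biUnion (fun u => (𝓔.filter (fun f => u ∈ f)).erase e) := by
          intro f hf
          rw [Finset.mem_filter] at hf
          obtain ⟨u, hu_f, hu_e⟩ := Finset.not_disjoint_iff.mp hf.2.2
          exact Finset.mem_biUnion.mpr ⟨u, hu_e,
            Finset.mem_erase.mpr ⟨hf.2.1, Finset.mem_filter.mpr ⟨hf.1, hu_f⟩⟩⟩
        calc Ne ≤ (e.biUnion (fun u => (𝓔.filter (fun f => u ∈ f)).erase e)).card :=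
              Finset.card_le_card hsub2
          _ ≤ ∑ u ∈ e, ((𝓔.filter (fun f => u ∈ f)).erase e).card := Finset.card_biUnion_le
          _ ≤ ∑ u ∈ e, (Δ - 1) := by
              apply Finset.sum_le_sum
              intro u hu
              rw [Finset.card_erase_of_mem (Finset.mem_filter.mpr ⟨he, hu⟩)]
              exact Nat.sub_le_sub_right (hdeg u) 1
          _ = e.card * (Δ - 1) := by rw [Finset.sum_const, smul_eq_mul]
      have hneK : Ne ≤ k * (Δ - 1) := le_trans hne2 (Nat.mul_le_mul_right _ (hsize e he).2)
      have hneR : (Ne : ℝ) ≤ (k:ℝ) * ((Δ:ℝ) - 1) := by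
        have : ((k * (Δ-1) : ℕ) : ℝ) = (k:ℝ) * ((Δ:ℝ) - 1) := by
          push_cast [Nat.cast_sub hΔ1]; ring
        calc (Ne:ℝ) ≤ ((k * (Δ-1) : ℕ) : ℝ) := by exact_mod_cast hneK
          _ = (k:ℝ) * ((Δ:ℝ) - 1) := this
      have hkR : (2:ℝ) ≤ (k:ℝ) := by exact_mod_cast hk2
      have hxratio : x / (1-x) = 1/(t*Δ - 1) := by
        rw [hxdef]
        have h1 : t*Δ ≠ 0 := by linarith
        have h2 : t*Δ - 1 ≠ 0 := by linarith
        field_simp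
      have hm : (Ne:ℝ) * (x/(1-x)) ≤ 1 := by
        rw [hxratio]
        rw [mul_one_div, div_le_one (by linarith : (0:ℝ) < t*Δ - 1)]
        nlinarith [hneR, hkR, ht, hΔR]
      have hexp : Real.exp (-1) ≤ (1-x)^Ne := MUB.exp_le_pow hx0 hx2 Ne hm
      have hqmono : (q:ℝ)^(k'-1) ≤ (q:ℝ)^(e.card-1) := by
        apply pow_le_pow_right₀ (by exact_mod_cast hq1)
        have := (hsize e he).1; omega
      have hxe : x * Real.exp (-1) * (Real.exp 1 * t * Δ) = 1 := by
        rw [hxdef, Real.exp_neg]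
        have h1 : t*Δ ≠ 0 := by linarith
        field_simp
      calc (1:ℝ) = x * Real.exp (-1) * (Real.exp 1 * t * Δ) := hxe.symm
        _ ≤ x * (1-x)^Ne * (Real.exp 1 * t * Δ) :=
            mul_le_mul_of_nonneg_right (mul_le_mul_of_nonneg_left hexp hx0) hM0.le
        _ ≤ x * (1-x)^Ne * (q:ℝ)^(e.card-1) := by
            apply mul_le_mul_of_nonneg_left (le_trans hqpow hqmono)
            exact mul_nonneg hx0 (pow_nonneg h1mx _)
    have hmainAll := MUB.main 𝓔 hq1 x hx0 hx1 hnon hcond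
    set S₁ := 𝓔.filter (fun f => v ∈ f) with hS₁def
    set S₂ := 𝓔.filter (fun f => ¬ v ∈ f) with hS₂def
    have hUU : S₂ ∪ S₁ = 𝓔 := by
      rw [Finset.union_comm]; exact Finset.filter_union_filter_not_eq _ 𝓔
    have hdisj12 : Disjoint S₁ S₂ := by
      rw [Finset.disjoint_left]
      intro f hf1 hf2
      exact (Finset.mem_filter.mp hf2).2 (Finset.mem_filter.mp hf1).2
    have hpeel := MUB.peel 𝓔 𝓔 x hx1
      (fun T hT f hf hfT => hmainAll T hT.subset f hf hfT)
      S₁ (Finset.filter_subset _ _) S₂ hdisj12 (by rw [hUU])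
    rw [hUU] at hpeel
    -- independence for the vertex event
    have hP : ∀ σ τ : V → Fin q, (∀ u ∈ ({v} : Finset V), σ u = τ u) → σ v = c → τ v = c :=
      fun σ τ hag h => (hag v (Finset.mem_singleton_self v)).symm.trans h
    have hQ : ∀ σ τ : V → Fin q, (∀ u ∉ ({v} : Finset V), σ u = τ u) →
        MUB.Av S₂ σ → MUB.Av S₂ τ := by
      intro σ τ hag hav f hf hm
      obtain ⟨c', hc'⟩ := hm
      refine hav f hf ⟨c', fun u hu => ?_⟩
      have huv : u ∉ ({v} : Finset V) := by
        rw [Finset.mem_singleton]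
        rintro rfl
        exact (Finset.mem_filter.mp hf).2 hu
      rw [hag u huv]; exact hc' u hu
    have hind := MUB.indep_ncard {v} (fun σ => σ v = c) (MUB.Av S₂) hP hQ
    rw [MUB.ncard_vc v c] at hind
    have hqn : q^(Fintype.card V) = q^(Fintype.card V - 1)*q := by
      have h := pow_succ q (Fintype.card V - 1)
      rw [Nat.sub_add_cancel hn1] at h
      exact h
    have hcnt : {σ : V → Fin q | MUB.Av S₂ σ ∧ σ v = c}.ncard * q
        = {σ : V → Fin q | MUB.Av S₂ σ}.ncard := by
      refine Nat.eq_of_mul_eq_mul_left (pow_pos hq0 (Fintype.card V - 1)) ?_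
      calc q^(Fintype.card V - 1) * ({σ : V → Fin q | MUB.Av S₂ σ ∧ σ v = c}.ncard * q)
          = {σ : V → Fin q | MUB.Av S₂ σ ∧ σ v = c}.ncard * q^(Fintype.card V) := by
            rw [hqn]; ring
        _ = q^(Fintype.card V - 1) * {σ : V → Fin q | MUB.Av S₂ σ}.ncard := hind
    have hL : {σ : V → Fin q | MUB.Av 𝓔 σ ∧ σ v = c}.ncard
        ≤ {σ : V → Fin q | MUB.Av S₂ σ ∧ σ v = c}.ncard := by
      apply Set.ncard_le_ncard
      · exact fun σ hσ => ⟨MUB.Av_anti (Finset.filter_subset _ _) hσ.1, hσ.2⟩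
      · exact Set.toFinite _
    have hS₁Δ : S₁.card ≤ Δ := hdeg v
    have hBern : 1 - 1/t ≤ (1-x)^Δ := by
      have hb := one_add_mul_le_pow (by linarith : (-2:ℝ) ≤ -x) Δ
      have hΔx : (Δ:ℝ) * x = 1/t := by
        rw [hxdef]
        field_simp
      have : (1:ℝ) + Δ * (-x) = 1 - 1/t := by rw [← hΔx]; ring
      calc 1 - 1/t = 1 + (Δ:ℝ) * (-x) := this.symm
        _ ≤ (1 + -x)^Δ := hb
        _ = (1-x)^Δ := by ring_nf
    have hxpow : (1-x)^Δ ≤ (1-x)^S₁.card := pow_le_pow_of_le_one h1mx (by linarith) hS₁Δ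
    have hC0 : (0:ℝ) ≤ ({σ : V → Fin q | MUB.Av S₂ σ}.ncard : ℝ) := Nat.cast_nonneg _
    have hRc : (1 - 1/t) * ({σ : V → Fin q | MUB.Av S₂ σ}.ncard : ℝ)
        ≤ ({σ : V → Fin q | MUB.Av 𝓔 σ}.ncard : ℝ) :=
      le_trans (mul_le_mul_of_nonneg_right (hBern.trans hxpow) hC0) hpeel
    -- final numeric assembly
    have hq0R : (0:ℝ) < q := by exact_mod_cast hq0
    have hu0 : (0:ℝ) ≤ 1/t := by positivity
    have hu2 : 1/t ≤ 1/2 := one_div_le_one_div_of_le two_pos ht2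
    have h6 : (1:ℝ) ≤ (1 + 4/t) * (1 - 1/t) := by
      have key : (0:ℝ) ≤ (1/t) * (3 - 4*(1/t)) :=
        mul_nonneg hu0 (by linarith)
      have expand : (1 + 4/t) * (1 - 1/t) = 1 + (1/t) * (3 - 4*(1/t)) := by ring
      rw [expand]
      linarith [key]
    have hR0 : (0:ℝ) ≤ ({σ : V → Fin q | MUB.Av 𝓔 σ}.ncard : ℝ) := Nat.cast_nonneg _
    have h7 : ({σ : V → Fin q | MUB.Av S₂ σ}.ncard : ℝ)
        ≤ (1 + 4/t) * ({σ : V → Fin q | MUB.Av 𝓔 σ}.ncard : ℝ) := by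
      calc ({σ : V → Fin q | MUB.Av S₂ σ}.ncard : ℝ)
          = 1 * ({σ : V → Fin q | MUB.Av S₂ σ}.ncard : ℝ) := (one_mul _).symm
        _ ≤ ((1 + 4/t) * (1 - 1/t)) * ({σ : V → Fin q | MUB.Av S₂ σ}.ncard : ℝ) :=
            mul_le_mul_of_nonneg_right h6 hC0
        _ = (1 + 4/t) * ((1 - 1/t) * ({σ : V → Fin q | MUB.Av S₂ σ}.ncard : ℝ)) := by ring
        _ ≤ (1 + 4/t) * ({σ : V → Fin q | MUB.Av 𝓔 σ}.ncard : ℝ) := by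
            apply mul_le_mul_of_nonneg_left hRc
            positivity
    have hfinal : ({σ : V → Fin q | MUB.Av 𝓔 σ ∧ σ v = c}.ncard : ℝ) * q
        ≤ (1 + 4/t) * ({σ : V → Fin q | MUB.Av 𝓔 σ}.ncard : ℝ) := by
      calc ({σ : V → Fin q | MUB.Av 𝓔 σ ∧ σ v = c}.ncard : ℝ) * q
          ≤ ({σ : V → Fin q | MUB.Av S₂ σ ∧ σ v = c}.ncard : ℝ) * q := by
            apply mul_le_mul_of_nonneg_right _ hq0R.le
            exact_mod_cast hL
        _ = ({σ : V → Fin q | MUB.Av S₂ σ}.ncard : ℝ) := by exact_mod_cast hcnt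
        _ ≤ (1 + 4/t) * ({σ : V → Fin q | MUB.Av 𝓔 σ}.ncard : ℝ) := h7
    have goalEq : 1/(q:ℝ) * (1 + 4/t) * ({σ : V → Fin q | MUB.Av 𝓔 σ}.ncard : ℝ)
        = ((1 + 4/t) * ({σ : V → Fin q | MUB.Av 𝓔 σ}.ncard : ℝ)) / q := by ring
    rw [goalEq, le_div_iff₀ hq0R]
    exact hfinal
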